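/- Let A be a finite abelian group, G a finite group, α : G → Aut(A) an action, and K = A ⋊_α G. Let R ⊆ Â be a complete set of representatives of the orbits of the G-action on Â. Then for every class function f : G → ℂ, Ind_G^K f = Σ_{σ ∈ R} Ind_{K(σ)}^K (σ⊙(Res_{G(σ)}^G f)), where K(σ) = A ⋊_α G(σ) and (σ⊙h)(a, s) = σ(a)·h(s) for h : G(σ) → ℂ. (This is the group case of Proposition 4.3: the induction of f from G to K decomposes as a sum over the orbits of G on Â.) -/

import Mathlib

namespace Stmt16

open scoped Classical in
/-- The function induced from a subgroup `H` of a finite group `K`: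
`(Ind_H^K f)(k) = (1/|H|) · Σ_{t ∈ K, t k t⁻¹ ∈ H} f (t k t⁻¹)`. -/
noncomputable def ind {K : Type*} [Group K] [Fintype K] (H : Subgroup K) (f : K → ℂ) :
    K → ℂ :=
  fun k => (1 / (Nat.card H : ℂ)) * ∑ t : K, if t * k * t⁻¹ ∈ H then f (t * k * t⁻¹) else 0

instance {A G : Type*} [Group A] [Fintype A] [Group G] [Fintype G] {α : G →* MulAut A} :
    Fintype (A ⋊[α] G) :=
  Fintype.ofEquiv (A × G)
    { toFun := fun p => ⟨p.1, p.2⟩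
      invFun := fun x => (x.left, x.right)
      left_inv := fun _ => rfl
      right_inv := fun _ => rfl }

section AuxLemmas

open Finset
open scoped Classical
section
variable {A G : Type*} [CommGroup A] [Fintype A] [Group G] [Fintype G] (α : G →* MulAut A)

lemma conj_conj {K : Type*} [Group K] (u t k : K) : (u*t)*k*(u*t)⁻¹ = u*(t*k*t⁻¹)*u⁻¹ := by group

lemma sum_char_A (χ : A →* ℂˣ) (b₀ : A) (h : χ b₀ ≠ 1) : ∑ b : A, ((χ b : ℂˣ) : ℂ) = 0 := by
  have key : (χ b₀ : ℂ) * ∑ b : A, ((χ b : ℂˣ) : ℂ) = ∑ b : A, ((χ b : ℂˣ) : ℂ) := by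
    rw [Finset.mul_sum]
    exact Fintype.sum_equiv (Equiv.mulLeft b₀) _ _ (fun b => by simp)
  have h1 : ((χ b₀ : ℂ) - 1) * ∑ b : A, ((χ b : ℂˣ) : ℂ) = 0 := by linear_combination key
  rcases mul_eq_zero.mp h1 with h2 | h2
  · exact absurd (Units.ext (by rw [sub_eq_zero] at h2; simpa using h2)) h
  · exact h2

lemma sum_chars [Fintype (A →* ℂˣ)] (hcard : Fintype.card (A →* ℂˣ) = Fintype.card A) (c : A) :
    ∑ τ : A →* ℂˣ, ((τ c : ℂˣ) : ℂ) = if c = 1 then (Fintype.card A : ℂ) else 0 := by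
  split_ifs with hc
  · subst hc; simp [hcard]
  · obtain ⟨φ, hφ⟩ := CommGroup.exists_apply_ne_one_of_hasEnoughRootsOfUnity A ℂ hc
    have key : (φ c : ℂ) * ∑ τ : A →* ℂˣ, ((τ c : ℂˣ) : ℂ) = ∑ τ : A →* ℂˣ, ((τ c : ℂˣ) : ℂ) := by
      rw [Finset.mul_sum]
      exact Fintype.sum_equiv (Equiv.mulLeft φ) _ _ (fun τ => by simp)
    have h1 : ((φ c : ℂ) - 1) * ∑ τ : A →* ℂˣ, ((τ c : ℂˣ) : ℂ) = 0 := by linear_combination key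
    rcases mul_eq_zero.mp h1 with h2 | h2
    · exact absurd (Units.ext (by rw [sub_eq_zero] at h2; simpa using h2)) hφ
    · exact h2

variable (Gσ : (A →* ℂˣ) → Subgroup G)

lemma mem_Gσ_iff (hGσ : ∀ (σ : A →* ℂˣ) (g : G), g ∈ Gσ σ ↔ ∀ b : A, σ ((α g⁻¹) b) = σ b) (σ : A →* ℂˣ) (r : G) : r ∈ Gσ σ ↔ ∀ b, σ ((α r) b) = σ b := by
  constructor
  · intro hr
    have h := (hGσ σ r⁻¹).mp ((Gσ σ).inv_mem hr)
    simpa using h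
  · intro h
    refine (hGσ σ r).mpr fun b => ?_
    have := h ((α r⁻¹) b)
    rw [show (α r) ((α r⁻¹) b) = b by rw [← MulAut.mul_apply, ← map_mul]; simp] at this
    exact this.symm
lemma ite_char (hGσ : ∀ (σ : A →* ℂˣ) (g : G), g ∈ Gσ σ ↔ ∀ b : A, σ ((α g⁻¹) b) = σ b)
    (σ : A →* ℂˣ) (r : G) (a : A) :
    (if r ∈ Gσ σ then ((σ a : ℂˣ) : ℂ) else 0) * (Fintype.card A : ℂ)
      = ∑ b : A, ((σ (a * b⁻¹ * (α r) b) : ℂˣ) : ℂ) := by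
  by_cases hr : r ∈ Gσ σ
  · rw [if_pos hr]
    have h := (mem_Gσ_iff α Gσ hGσ σ r).mp hr
    have : ∀ b : A, ((σ (a * b⁻¹ * (α r) b) : ℂˣ) : ℂ) = ((σ a : ℂˣ) : ℂ) := by
      intro b
      rw [map_mul, map_mul, h b, map_inv]
      simp
    rw [Finset.sum_congr rfl (fun b _ => this b)]
    simp [mul_comm]
  · rw [if_neg hr, zero_mul]
    have hex : ∃ b, σ ((α r) b) ≠ σ b := by
      by_contra hcon
      push_neg at hcon
      exact hr ((mem_Gσ_iff α Gσ hGσ σ r).mpr hcon)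
    obtain ⟨b₀, hb₀⟩ := hex
    set χ : A →* ℂˣ := σ.comp (α r).toMonoidHom * σ⁻¹ with hχ
    have hχval : ∀ b, ((χ b : ℂˣ) : ℂ) = ((σ ((α r) b) : ℂˣ) : ℂ) * (((σ b : ℂˣ) : ℂ))⁻¹ := by
      intro b; simp [hχ]
    have hterm : ∀ b : A, ((σ (a * b⁻¹ * (α r) b) : ℂˣ) : ℂ) = ((σ a : ℂˣ) : ℂ) * ((χ b : ℂˣ) : ℂ) := by
      intro b
      rw [map_mul, map_mul, map_inv, hχval b]
      have h0 : ((σ b : ℂˣ) : ℂ) ≠ 0 := Units.ne_zero _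
      simp only [Units.val_mul, Units.val_inv_eq_inv_val]
      field_simp
    rw [Finset.sum_congr rfl (fun b _ => hterm b), ← Finset.mul_sum]
    rw [sum_char_A χ b₀ ?_, mul_zero]
    intro heq
    apply hb₀
    have : σ ((α r) b₀) * (σ b₀)⁻¹ = 1 := by simpa [hχ] using heq
    rw [mul_inv_eq_one] at this
    exact this

lemma fiber_card (hGσ : ∀ (σ : A →* ℂˣ) (g : G), g ∈ Gσ σ ↔ ∀ b : A, σ ((α g⁻¹) b) = σ b)
    (σ τ : A →* ℂˣ) (g₀ : G) (h₀ : ∀ b, σ ((α g₀) b) = τ b) :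
    (Finset.univ.filter (fun g : G => ∀ b, σ ((α g) b) = τ b)).card = Nat.card (Gσ σ) := by
  rw [Nat.card_eq_fintype_card, Fintype.card_subtype]
  apply Finset.card_bij' (fun g _ => g * g₀⁻¹) (fun h _ => h * g₀)
  · intro g hg
    simp only [Finset.mem_filter, Finset.mem_univ, true_and] at hg ⊢
    refine (mem_Gσ_iff α Gσ hGσ σ _).mpr fun b => ?_
    have h1 : (α (g * g₀⁻¹)) b = (α g) ((α g₀⁻¹) b) := by
      rw [map_mul]; rfl
    rw [h1, hg ((α g₀⁻¹) b), ← h₀ ((α g₀⁻¹) b)]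
    congr 1
    rw [← MulAut.mul_apply, ← map_mul]; simp
  · intro h hh
    simp only [Finset.mem_filter, Finset.mem_univ, true_and] at hh ⊢
    intro b
    have hmem := (mem_Gσ_iff α Gσ hGσ σ _).mp hh
    have h1 : (α (h * g₀)) b = (α h) ((α g₀) b) := by rw [map_mul]; rfl
    rw [h1, hmem ((α g₀) b), h₀ b]
  · intro g _; simp
  · intro h _; simp
lemma orbit_partition [Fintype (A →* ℂˣ)] (R : Finset (A →* ℂˣ))
    (hR : ∀ τ : A →* ℂˣ, ∃! σ, σ ∈ R ∧ ∃ g : G, ∀ b : A, τ b = σ ((α g⁻¹) b))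
    (F : (A →* ℂˣ) → ℂ) :
    ∑ σ ∈ R, ∑ τ : A →* ℂˣ, (if ∃ g, ∀ b, σ ((α g) b) = τ b then F τ else 0)
      = ∑ τ : A →* ℂˣ, F τ := by
  rw [Finset.sum_comm]
  refine Finset.sum_congr rfl fun τ _ => ?_
  have hiff : ∀ σ : A →* ℂˣ, (∃ g, ∀ b, σ ((α g) b) = τ b) ↔ (∃ g : G, ∀ b, τ b = σ ((α g⁻¹) b)) := by
    intro σ
    constructor
    · rintro ⟨g, h⟩; exact ⟨g⁻¹, fun b => by rw [inv_inv]; exact (h b).symm⟩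
    · rintro ⟨g, h⟩; exact ⟨g⁻¹, fun b => (h b).symm⟩
  obtain ⟨σ₀, ⟨hσ₀R, hP⟩, huniq⟩ := hR τ
  have hcong : ∀ σ ∈ R, (if ∃ g, ∀ b, σ ((α g) b) = τ b then F τ else 0)
      = if σ = σ₀ then F τ else 0 := by
    intro σ hσ
    by_cases hq : ∃ g, ∀ b, σ ((α g) b) = τ b
    · rw [if_pos hq, if_pos (huniq σ ⟨hσ, (hiff σ).mp hq⟩)]
    · rw [if_neg hq, if_neg]
      rintro rfl
      exact hq ((hiff σ).mpr hP)
  rw [Finset.sum_congr rfl hcong, Finset.sum_ite_eq' R σ₀ (fun _ => F τ), if_pos hσ₀R]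
lemma step1 (hGσ : ∀ (σ : A →* ℂˣ) (g : G), g ∈ Gσ σ ↔ ∀ b : A, σ ((α g⁻¹) b) = σ b)
    [Fintype (A →* ℂˣ)] (σ : A →* ℂˣ) (a : A) (r : G) :
    ∑ g : G, (if g*r*g⁻¹ ∈ Gσ σ then ((σ ((α g) a) : ℂˣ) : ℂ) else 0)
      = ∑ τ : A →* ℂˣ, (if ∃ g₀, ∀ b, σ ((α g₀) b) = τ b
          then (Nat.card (Gσ σ) : ℂ) * (if r ∈ Gσ τ then ((τ a : ℂˣ) : ℂ) else 0) else 0) := by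
  rw [← Finset.sum_fiberwise Finset.univ (fun g : G => σ.comp (α g).toMonoidHom)
    (fun g => if g*r*g⁻¹ ∈ Gσ σ then ((σ ((α g) a) : ℂˣ) : ℂ) else 0)]
  refine Finset.sum_congr rfl fun τ _ => ?_
  have hfilter : Finset.univ.filter (fun g : G => σ.comp (α g).toMonoidHom = τ)
      = Finset.univ.filter (fun g : G => ∀ b, σ ((α g) b) = τ b) := by
    refine Finset.filter_congr fun g _ => ?_
    rw [DFunLike.ext_iff]
    rfl
  rw [hfilter]
  by_cases hex : ∃ g₀, ∀ b, σ ((α g₀) b) = τ b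
  · rw [if_pos hex]
    obtain ⟨g₀, hg₀⟩ := hex
    have hterm : ∀ g ∈ Finset.univ.filter (fun g : G => ∀ b, σ ((α g) b) = τ b),
        (if g*r*g⁻¹ ∈ Gσ σ then ((σ ((α g) a) : ℂˣ) : ℂ) else 0)
          = (if r ∈ Gσ τ then ((τ a : ℂˣ) : ℂ) else 0) := by
      intro g hg
      rw [Finset.mem_filter] at hg
      have hτ : ∀ x, τ x = σ ((α g) x) := fun x => (hg.2 x).symm
      have key : ∀ c : A, (α (g*r*g⁻¹)) ((α g) c) = (α g) ((α r) c) := by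
        intro c
        rw [← MulAut.mul_apply, ← MulAut.mul_apply, ← map_mul, ← map_mul]
        congr 1
        group
      have hmem : (g*r*g⁻¹ ∈ Gσ σ) ↔ (r ∈ Gσ τ) := by
        rw [mem_Gσ_iff α Gσ hGσ σ, mem_Gσ_iff α Gσ hGσ τ]
        constructor
        · intro h b
          have h2 := h ((α g) b)
          rw [key b] at h2
          rw [hτ, hτ]
          exact h2
        · intro h b
          have hb : b = (α g) ((α g⁻¹) b) := by
            rw [← MulAut.mul_apply, ← map_mul]
            simp
          rw [hb, key ((α g⁻¹) b), ← hτ, ← hτ, h ((α g⁻¹) b)]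
      rw [hmem, hτ a]
    rw [Finset.sum_congr rfl hterm, Finset.sum_const, nsmul_eq_mul]
    congr 1
    rw [fiber_card α Gσ hGσ σ τ g₀ hg₀]
  · rw [if_neg hex]
    rw [Finset.filter_false_of_mem, Finset.sum_empty]
    intro g _
    exact fun h => hex ⟨g, h⟩

lemma core [Fintype (A →* ℂˣ)] (hcard : Fintype.card (A →* ℂˣ) = Fintype.card A)
    (hGσ : ∀ (σ : A →* ℂˣ) (g : G), g ∈ Gσ σ ↔ ∀ b : A, σ ((α g⁻¹) b) = σ b)
    (R : Finset (A →* ℂˣ))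
    (hR : ∀ τ : A →* ℂˣ, ∃! σ, σ ∈ R ∧ ∃ g : G, ∀ b : A, τ b = σ ((α g⁻¹) b))
    (a : A) (r : G) :
    ∑ σ ∈ R, ((Nat.card (Gσ σ) : ℂ))⁻¹
        * ∑ g : G, (if g*r*g⁻¹ ∈ Gσ σ then ((σ ((α g) a) : ℂˣ) : ℂ) else 0)
      = ∑ b : A, (if b * a * (α r) b⁻¹ = 1 then (1:ℂ) else 0) := by
  have hA0 : (Fintype.card A : ℂ) ≠ 0 := Nat.cast_ne_zero.mpr Fintype.card_ne_zero
  have hT : ∑ σ ∈ R, ((Nat.card (Gσ σ) : ℂ))⁻¹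
        * ∑ g : G, (if g*r*g⁻¹ ∈ Gσ σ then ((σ ((α g) a) : ℂˣ) : ℂ) else 0)
      = ∑ τ : A →* ℂˣ, (if r ∈ Gσ τ then ((τ a : ℂˣ) : ℂ) else 0) := by
    rw [← orbit_partition α R hR (fun τ => if r ∈ Gσ τ then ((τ a : ℂˣ) : ℂ) else 0)]
    refine Finset.sum_congr rfl fun σ _ => ?_
    rw [step1 α Gσ hGσ σ a r, Finset.mul_sum]
    refine Finset.sum_congr rfl fun τ _ => ?_
    have hN0 : (Nat.card (Gσ σ) : ℂ) ≠ 0 := Nat.cast_ne_zero.mpr Nat.card_pos.ne'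
    by_cases hex : ∃ g₀, ∀ b, σ ((α g₀) b) = τ b
    · rw [if_pos hex, ← mul_assoc, inv_mul_cancel₀ hN0, one_mul, if_pos hex]
    · rw [if_neg hex, mul_zero, if_neg hex]
  rw [hT]
  -- multiply by card A
  have hmul : (∑ τ : A →* ℂˣ, (if r ∈ Gσ τ then ((τ a : ℂˣ) : ℂ) else 0)) * (Fintype.card A : ℂ)
      = (∑ b : A, (if b * a * (α r) b⁻¹ = 1 then (1:ℂ) else 0)) * (Fintype.card A : ℂ) := by
    rw [Finset.sum_mul, Finset.sum_mul]
    calc ∑ τ : A →* ℂˣ, (if r ∈ Gσ τ then ((τ a : ℂˣ) : ℂ) else 0) * (Fintype.card A : ℂ)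
        = ∑ τ : A →* ℂˣ, ∑ b : A, ((τ (a * b⁻¹ * (α r) b) : ℂˣ) : ℂ) :=
          Finset.sum_congr rfl fun τ _ => ite_char α Gσ hGσ τ r a
      _ = ∑ b : A, ∑ τ : A →* ℂˣ, ((τ (a * b⁻¹ * (α r) b) : ℂˣ) : ℂ) := Finset.sum_comm
      _ = ∑ b : A, (if a * b⁻¹ * (α r) b = 1 then (Fintype.card A : ℂ) else 0) :=
          Finset.sum_congr rfl fun b _ => sum_chars hcard _
      _ = ∑ b : A, (if b * a * (α r) b⁻¹ = 1 then (1:ℂ) else 0) * (Fintype.card A : ℂ) := by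
          refine Fintype.sum_equiv (Equiv.inv A) _ _ fun b => ?_
          simp only [Equiv.inv_apply, inv_inv]
          have hcond : (a * b⁻¹ * (α r) b = 1) ↔ (b⁻¹ * a * (α r) b = 1) := by
            rw [mul_comm a b⁻¹]
          rw [hcond]
          split_ifs <;> simp
  exact mul_right_cancel₀ hA0 hmul
open SemidirectProduct in
lemma mem_inr_range_iff (x : A ⋊[α] G) :
    x ∈ (inr : G →* A ⋊[α] G).range ↔ x.left = 1 := by
  constructor
  · rintro ⟨g, rfl⟩; simp
  · intro h; exact ⟨x.right, by ext <;> simp [h]⟩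

open SemidirectProduct in
lemma card_comap (H : Subgroup G) :
    Nat.card (H.comap (rightHom : A ⋊[α] G →* G)) = Fintype.card A * Nat.card H := by
  have e : (H.comap (rightHom : A ⋊[α] G →* G)) ≃ A × H :=
    { toFun := fun x => (x.1.left, ⟨x.1.right, by have := x.2; rwa [Subgroup.mem_comap] at this⟩)
      invFun := fun p => ⟨⟨p.1, p.2.1⟩, by rw [Subgroup.mem_comap]; exact p.2.2⟩
      left_inv := fun x => by ext <;> rfl
      right_inv := fun p => by ext <;> rfl }
  rw [Nat.card_congr e, Nat.card_prod, Nat.card_eq_fintype_card]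
end
end AuxLemmas

/-- Proposition 4.3, group case: if `R ⊆ Â` is a complete set of representatives of the
orbits of the `G`-action on `Â` and `f` is a class function on `G`, then
`Ind_G^K f = Σ_{σ ∈ R} Ind_{K(σ)}^K (σ⊙(Res_{G(σ)}^G f))`, where `K = A ⋊[α] G`,
`K(σ) = A ⋊[α] G(σ)` and `(σ⊙h)(a, s) = σ(a)·h(s)`. -/
theorem ind_from_G_decomposition {A G : Type*} [CommGroup A] [Fintype A]
    [Group G] [Fintype G] (α : G →* MulAut A)
    (Gσ : (A →* ℂˣ) → Subgroup G)
    (hGσ : ∀ (σ : A →* ℂˣ) (g : G), g ∈ Gσ σ ↔ ∀ b : A, σ ((α g⁻¹) b) = σ b)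
    (R : Finset (A →* ℂˣ))
    (hR : ∀ τ : A →* ℂˣ, ∃! σ, σ ∈ R ∧ ∃ g : G, ∀ b : A, τ b = σ ((α g⁻¹) b))
    (f : G → ℂ) (hf : ∀ s t : G, f (s * t * s⁻¹) = f t) :
    ind (SemidirectProduct.inr : G →* A ⋊[α] G).range (fun x => f x.right)
      = fun k => ∑ σ ∈ R,
          ind ((Gσ σ).comap (SemidirectProduct.rightHom : A ⋊[α] G →* G))
            (fun x => ((σ x.left : ℂˣ) : ℂ) * f x.right) k := by
  classical
  obtain ⟨e⟩ := CommGroup.monoidHom_mulEquiv_of_hasEnoughRootsOfUnity A ℂ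
  letI : Fintype (A →* ℂˣ) := Fintype.ofEquiv A e.symm.toEquiv
  have hcard : Fintype.card (A →* ℂˣ) = Fintype.card A := Fintype.card_congr e.toEquiv
  have hA0 : (Fintype.card A : ℂ) ≠ 0 := Nat.cast_ne_zero.mpr Fintype.card_ne_zero
  have hG0 : (Fintype.card G : ℂ) ≠ 0 := Nat.cast_ne_zero.mpr Fintype.card_ne_zero
  have hrange : Nat.card (SemidirectProduct.inr : G →* A ⋊[α] G).range = Fintype.card G := by
    rw [Nat.card_congr (MonoidHom.ofInjective SemidirectProduct.inr_injective).toEquiv.symm,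
      Nat.card_eq_fintype_card]
  funext k
  -- the common normal form
  set Ψ : (A ⋊[α] G) → ℂ := fun x =>
    ∑ b : A, (if b * x.left * (α x.right) b⁻¹ = 1 then f x.right else 0) with hΨ
  have hL : ind (SemidirectProduct.inr : G →* A ⋊[α] G).range
      (fun x : A ⋊[α] G => f x.right) k
      = (Fintype.card G : ℂ)⁻¹ * ((Fintype.card A : ℂ)⁻¹ * ∑ t : A ⋊[α] G, Ψ (t*k*t⁻¹)) := by
    rw [ind, hrange, one_div]
    congr 1
    rw [eq_comm, inv_mul_eq_iff_eq_mul₀ hA0]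
    have key : ∀ b : A, ∑ t : A ⋊[α] G,
        (if b * (t*k*t⁻¹).left * (α ((t*k*t⁻¹).right)) b⁻¹ = 1 then f ((t*k*t⁻¹).right) else 0)
        = ∑ t : A ⋊[α] G, (if t*k*t⁻¹ ∈ (SemidirectProduct.inr : G →* A ⋊[α] G).range
            then f ((t*k*t⁻¹).right) else 0) := by
      intro b
      refine Fintype.sum_equiv (Equiv.mulLeft (SemidirectProduct.inl b)) _ _ fun t => ?_
      simp only [Equiv.coe_mulLeft]
      simp only [conj_conj]
      have h1 : (SemidirectProduct.inl b * (t*k*t⁻¹) * (SemidirectProduct.inl b)⁻¹).left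
          = b * (t*k*t⁻¹).left * (α ((t*k*t⁻¹).right)) b⁻¹ := by simp
      have h2 : (SemidirectProduct.inl b * (t*k*t⁻¹) * (SemidirectProduct.inl b)⁻¹).right
          = (t*k*t⁻¹).right := by simp
      simp only [mem_inr_range_iff α, h1, h2]
    have hsum : ∑ t : A ⋊[α] G, Ψ (t*k*t⁻¹) = _ := calc ∑ t : A ⋊[α] G, Ψ (t*k*t⁻¹)
        = ∑ b : A, ∑ t : A ⋊[α] G,
            (if b * (t*k*t⁻¹).left * (α ((t*k*t⁻¹).right)) b⁻¹ = 1
              then f ((t*k*t⁻¹).right) else 0) := Finset.sum_comm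
      _ = ∑ _b : A, ∑ t : A ⋊[α] G, (if t*k*t⁻¹ ∈ (SemidirectProduct.inr : G →* A ⋊[α] G).range
            then f ((t*k*t⁻¹).right) else 0) := Finset.sum_congr rfl fun b _ => key b
      _ = (Fintype.card A : ℂ) * ∑ t : A ⋊[α] G,
            (if t*k*t⁻¹ ∈ (SemidirectProduct.inr : G →* A ⋊[α] G).range
            then f ((t*k*t⁻¹).right) else 0) := by
          rw [Finset.sum_const, Finset.card_univ, nsmul_eq_mul]
    rw [hsum]
    congr!
  rw [hL]
  have hRσ : ∀ σ ∈ R, ind ((Gσ σ).comap (SemidirectProduct.rightHom : A ⋊[α] G →* G))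
      (fun x : A ⋊[α] G => ((σ x.left : ℂˣ) : ℂ) * f x.right) k
      = (Fintype.card A : ℂ)⁻¹ * ((Nat.card (Gσ σ) : ℂ)⁻¹ * ((Fintype.card G : ℂ)⁻¹ *
          ∑ t : A ⋊[α] G, ∑ g : G,
            (if g * (t*k*t⁻¹).right * g⁻¹ ∈ Gσ σ
              then ((σ ((α g) ((t*k*t⁻¹).left)) : ℂˣ) : ℂ) * f ((t*k*t⁻¹).right) else 0))) := by
    intro σ _
    rw [ind, card_comap α, one_div, Nat.cast_mul, mul_inv]
    rw [mul_assoc]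
    congr 1
    congr 1
    rw [eq_comm, inv_mul_eq_iff_eq_mul₀ hG0]
    have key2 : ∀ g : G, ∑ t : A ⋊[α] G,
        (if g * (t*k*t⁻¹).right * g⁻¹ ∈ Gσ σ
          then ((σ ((α g) ((t*k*t⁻¹).left)) : ℂˣ) : ℂ) * f ((t*k*t⁻¹).right) else 0)
        = ∑ t : A ⋊[α] G,
            (if t*k*t⁻¹ ∈ (Gσ σ).comap (SemidirectProduct.rightHom : A ⋊[α] G →* G)
              then ((σ ((t*k*t⁻¹).left) : ℂˣ) : ℂ) * f ((t*k*t⁻¹).right) else 0) := by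
      intro g
      refine Fintype.sum_equiv (Equiv.mulLeft (SemidirectProduct.inr g)) _ _ fun t => ?_
      simp only [Equiv.coe_mulLeft]
      simp only [conj_conj]
      have h1 : (SemidirectProduct.inr g * (t*k*t⁻¹) * (SemidirectProduct.inr g)⁻¹).left
          = (α g) ((t*k*t⁻¹).left) := by simp
      have h2 : (SemidirectProduct.inr g * (t*k*t⁻¹) * (SemidirectProduct.inr g)⁻¹).right
          = g * (t*k*t⁻¹).right * g⁻¹ := by simp
      have h3 : ∀ x : A ⋊[α] G,
          (x ∈ (Gσ σ).comap (SemidirectProduct.rightHom : A ⋊[α] G →* G)) ↔ x.right ∈ Gσ σ := by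
        intro x; rw [Subgroup.mem_comap]; rfl
      simp only [h3, h1, h2, hf g ((t*k*t⁻¹).right)]
    have hsum2 : ∑ t : A ⋊[α] G, ∑ g : G,
        (if g * (t*k*t⁻¹).right * g⁻¹ ∈ Gσ σ
          then ((σ ((α g) ((t*k*t⁻¹).left)) : ℂˣ) : ℂ) * f ((t*k*t⁻¹).right) else 0)
        = (Fintype.card G : ℂ) * ∑ t : A ⋊[α] G,
            (if t*k*t⁻¹ ∈ (Gσ σ).comap (SemidirectProduct.rightHom : A ⋊[α] G →* G)
              then ((σ ((t*k*t⁻¹).left) : ℂˣ) : ℂ) * f ((t*k*t⁻¹).right) else 0) := by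
      rw [Finset.sum_comm, Finset.sum_congr rfl (fun g _ => key2 g), Finset.sum_const,
        Finset.card_univ, nsmul_eq_mul]
    rw [hsum2]
  rw [Finset.sum_congr rfl hRσ]
  have hpull : ∑ σ ∈ R, (Fintype.card A : ℂ)⁻¹ * ((Nat.card (Gσ σ) : ℂ)⁻¹ *
      ((Fintype.card G : ℂ)⁻¹ * ∑ t : A ⋊[α] G, ∑ g : G,
        (if g * (t*k*t⁻¹).right * g⁻¹ ∈ Gσ σ
          then ((σ ((α g) ((t*k*t⁻¹).left)) : ℂˣ) : ℂ) * f ((t*k*t⁻¹).right) else 0)))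
      = (Fintype.card G : ℂ)⁻¹ * ((Fintype.card A : ℂ)⁻¹ *
          ∑ t : A ⋊[α] G, ∑ σ ∈ R, (Nat.card (Gσ σ) : ℂ)⁻¹ * ∑ g : G,
            (if g * (t*k*t⁻¹).right * g⁻¹ ∈ Gσ σ
              then ((σ ((α g) ((t*k*t⁻¹).left)) : ℂˣ) : ℂ) * f ((t*k*t⁻¹).right) else 0)) := by
    calc ∑ σ ∈ R, (Fintype.card A : ℂ)⁻¹ * ((Nat.card (Gσ σ) : ℂ)⁻¹ *
        ((Fintype.card G : ℂ)⁻¹ * ∑ t : A ⋊[α] G, ∑ g : G,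
          (if g * (t*k*t⁻¹).right * g⁻¹ ∈ Gσ σ
            then ((σ ((α g) ((t*k*t⁻¹).left)) : ℂˣ) : ℂ) * f ((t*k*t⁻¹).right) else 0)))
        = ∑ σ ∈ R, ((Fintype.card G : ℂ)⁻¹ * (Fintype.card A : ℂ)⁻¹) *
            ∑ t : A ⋊[α] G, (Nat.card (Gσ σ) : ℂ)⁻¹ * ∑ g : G,
              (if g * (t*k*t⁻¹).right * g⁻¹ ∈ Gσ σ
                then ((σ ((α g) ((t*k*t⁻¹).left)) : ℂˣ) : ℂ) * f ((t*k*t⁻¹).right) else 0) := by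
          refine Finset.sum_congr rfl fun σ _ => ?_
          rw [← Finset.mul_sum]
          ring
      _ = ((Fintype.card G : ℂ)⁻¹ * (Fintype.card A : ℂ)⁻¹) *
            ∑ σ ∈ R, ∑ t : A ⋊[α] G, (Nat.card (Gσ σ) : ℂ)⁻¹ * ∑ g : G,
              (if g * (t*k*t⁻¹).right * g⁻¹ ∈ Gσ σ
                then ((σ ((α g) ((t*k*t⁻¹).left)) : ℂˣ) : ℂ) * f ((t*k*t⁻¹).right) else 0) := by
          rw [Finset.mul_sum]
      _ = ((Fintype.card G : ℂ)⁻¹ * (Fintype.card A : ℂ)⁻¹) *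
            ∑ t : A ⋊[α] G, ∑ σ ∈ R, (Nat.card (Gσ σ) : ℂ)⁻¹ * ∑ g : G,
              (if g * (t*k*t⁻¹).right * g⁻¹ ∈ Gσ σ
                then ((σ ((α g) ((t*k*t⁻¹).left)) : ℂˣ) : ℂ) * f ((t*k*t⁻¹).right) else 0) := by
          rw [Finset.sum_comm]
      _ = (Fintype.card G : ℂ)⁻¹ * ((Fintype.card A : ℂ)⁻¹ *
            ∑ t : A ⋊[α] G, ∑ σ ∈ R, (Nat.card (Gσ σ) : ℂ)⁻¹ * ∑ g : G,
              (if g * (t*k*t⁻¹).right * g⁻¹ ∈ Gσ σ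
                then ((σ ((α g) ((t*k*t⁻¹).left)) : ℂˣ) : ℂ) * f ((t*k*t⁻¹).right) else 0)) := by
          rw [mul_assoc]
  rw [hpull]
  congr 1
  congr 1
  refine Finset.sum_congr rfl fun t _ => ?_
  symm
  -- per t : apply core
  have hfact : ∀ (σ : A →* ℂˣ) (g : G),
      (if g * (t*k*t⁻¹).right * g⁻¹ ∈ Gσ σ
        then ((σ ((α g) ((t*k*t⁻¹).left)) : ℂˣ) : ℂ) * f ((t*k*t⁻¹).right) else 0)
      = (if g * (t*k*t⁻¹).right * g⁻¹ ∈ Gσ σ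
          then ((σ ((α g) ((t*k*t⁻¹).left)) : ℂˣ) : ℂ) else 0) * f ((t*k*t⁻¹).right) := by
    intro σ g
    split_ifs <;> ring
  calc ∑ σ ∈ R, (Nat.card (Gσ σ) : ℂ)⁻¹ * ∑ g : G,
        (if g * (t*k*t⁻¹).right * g⁻¹ ∈ Gσ σ
          then ((σ ((α g) ((t*k*t⁻¹).left)) : ℂˣ) : ℂ) * f ((t*k*t⁻¹).right) else 0)
      = (∑ σ ∈ R, (Nat.card (Gσ σ) : ℂ)⁻¹ * ∑ g : G,
          (if g * (t*k*t⁻¹).right * g⁻¹ ∈ Gσ σ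
            then ((σ ((α g) ((t*k*t⁻¹).left)) : ℂˣ) : ℂ) else 0)) * f ((t*k*t⁻¹).right) := by
        rw [Finset.sum_mul]
        refine Finset.sum_congr rfl fun σ _ => ?_
        rw [Finset.sum_congr rfl (fun g _ => hfact σ g), ← Finset.sum_mul]
        ring
    _ = (∑ b : A, (if b * (t*k*t⁻¹).left * (α ((t*k*t⁻¹).right)) b⁻¹ = 1 then (1:ℂ) else 0))
          * f ((t*k*t⁻¹).right) := by
        rw [core α Gσ hcard hGσ R hR ((t*k*t⁻¹).left) ((t*k*t⁻¹).right)]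
    _ = Ψ (t*k*t⁻¹) := by
        rw [hΨ, Finset.sum_mul]
        refine Finset.sum_congr rfl fun b _ => ?_
        split_ifs <;> ring


end Stmt16
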